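/- Let Γ ⊂ ℤ² be a finite nonempty convex domain. Every integer-valued harmonic function H on Γ extends uniquely to an integer-valued harmonic function on the diamond hull of Γ: there exists exactly one φ : diam(Γ) → ℤ harmonic on diam(Γ) with φ|_Γ = H. -/

import Mathlib

/-- Two vertices of `ℤ²` are adjacent iff their Euclidean distance is `1`. -/
def adj (u v : ℤ × ℤ) : Prop := (u.1 - v.1) ^ 2 + (u.2 - v.2) ^ 2 = 1

instance : DecidableRel adj := fun u v => by unfold adj; infer_instance

/-- The reduced Laplacian of a finite domain `Γ ⊂ ℤ²`. -/
def lap {R : Type*} [CommRing R] (Γ : Finset (ℤ × ℤ)) (f : ↥Γ → R) : ↥Γ → R :=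
  fun v => (∑ w ∈ Γ.attach.filter (fun w => adj w.1 v.1), f w) - 4 * f v

lemma lap_add {R : Type*} [CommRing R] (Γ : Finset (ℤ × ℤ)) (f g : ↥Γ → R) :
    lap Γ (f + g) = lap Γ f + lap Γ g := by
  funext v; simp [lap, Finset.sum_add_distrib]; ring

lemma lap_neg {R : Type*} [CommRing R] (Γ : Finset (ℤ × ℤ)) (f : ↥Γ → R) :
    lap Γ (-f) = -(lap Γ f) := by
  funext v; simp [lap]; ring

lemma lap_smul {R : Type*} [CommRing R] (Γ : Finset (ℤ × ℤ)) (c : R) (f : ↥Γ → R) :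
    lap Γ (c • f) = c • lap Γ f := by
  funext v
  simp only [lap, Pi.smul_apply, smul_eq_mul, mul_sub, Finset.mul_sum]
  ring

lemma lap_zero {R : Type*} [CommRing R] (Γ : Finset (ℤ × ℤ)) :
    lap Γ (0 : ↥Γ → R) = 0 := by
  funext v; simp [lap]

/-- The boundary `∂Γ`: vertices of `Γ` adjacent to some vertex of `ℤ² \ Γ`. -/
noncomputable def boundary (Γ : Finset (ℤ × ℤ)) : Finset (ℤ × ℤ) :=
  @Finset.filter _ (fun v => ∃ w : ℤ × ℤ, w ∉ Γ ∧ adj w v) (Classical.decPred _) Γ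

lemma boundary_subset (Γ : Finset (ℤ × ℤ)) : boundary Γ ⊆ Γ :=
  @Finset.filter_subset _ (fun v => ∃ w : ℤ × ℤ, w ∉ Γ ∧ adj w v) (Classical.decPred _) Γ

/-- A function on `Γ` is harmonic if its Laplacian vanishes on the interior `Γ \ ∂Γ`. -/
def Harmonic {R : Type*} [CommRing R] (Γ : Finset (ℤ × ℤ)) (f : ↥Γ → R) : Prop :=
  ∀ v : ↥Γ, (v : ℤ × ℤ) ∉ boundary Γ → lap Γ f v = 0

/-- `Γ ⊂ ℤ²` is a convex domain if it is the set of lattice points of a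
convex open subset of `ℝ²`. -/
def IsConvexDomain (Γ : Finset (ℤ × ℤ)) : Prop :=
  ∃ P : Set (ℝ × ℝ), Convex ℝ P ∧ IsOpen P ∧
    ∀ v : ℤ × ℤ, v ∈ Γ ↔ ((v.1 : ℝ), (v.2 : ℝ)) ∈ P

/-- The reduced Laplacian as an additive group homomorphism on `ℤ^Γ`. -/
def lapHom (Γ : Finset (ℤ × ℤ)) : (↥Γ → ℤ) →+ (↥Γ → ℤ) where
  toFun := lap Γ
  map_zero' := lap_zero Γ
  map_add' := lap_add Γ

/-- The sandpile group `G_Γ = ℤ^Γ / Δ_Γ(ℤ^Γ)`. -/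
def SandpileGroup (Γ : Finset (ℤ × ℤ)) : Type :=
  (↥Γ → ℤ) ⧸ (lapHom Γ).range

instance (Γ : Finset (ℤ × ℤ)) : AddCommGroup (SandpileGroup Γ) :=
  inferInstanceAs (AddCommGroup ((↥Γ → ℤ) ⧸ (lapHom Γ).range))

/-- The canonical projection `ℤ^Γ → G_Γ`. -/
def sandMk (Γ : Finset (ℤ × ℤ)) : (↥Γ → ℤ) →+ SandpileGroup Γ :=
  QuotientAddGroup.mk' _

/-- The Laplacian at a vertex `v` of a function `f` relative to a set `S ⊆ ℤ²`:
the sum of `f` over the neighbors of `v` lying in `S`, minus `4·f(v)`. -/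
noncomputable def lapAt (S : Set (ℤ × ℤ)) (f : ℤ × ℤ → ℤ) (v : ℤ × ℤ) : ℤ :=
  (∑ᶠ w ∈ {w : ℤ × ℤ | w ∈ S ∧ adj w v}, f w) - 4 * f v

/-- `f` is harmonic on `S`: its Laplacian vanishes at every interior vertex of `S`
(a vertex of `S` all of whose neighbors lie in `S`). -/
noncomputable def HarmOn (S : Set (ℤ × ℤ)) (f : ℤ × ℤ → ℤ) : Prop :=
  ∀ v ∈ S, (∀ w : ℤ × ℤ, adj w v → w ∈ S) → lapAt S f v = 0

/-- One extension step: adjoin every vertex outside `S` adjacent to a vertex of `S`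
having exactly three neighbors in `S`. -/
def extStep (S : Set (ℤ × ℤ)) : Set (ℤ × ℤ) :=
  S ∪ {v | v ∉ S ∧ ∃ w ∈ S, adj v w ∧ {u : ℤ × ℤ | u ∈ S ∧ adj u w}.ncard = 3}

/-- The diamond hull of `S`: the union of all iterates of `extStep`. -/
def diamondHull (S : Set (ℤ × ℤ)) : Set (ℤ × ℤ) :=
  ⋃ k : ℕ, extStep^[k] S

lemma sq_add_sq_eq_one {a b : ℤ} (h : a^2 + b^2 = 1) :
    (a = 1 ∧ b = 0) ∨ (a = -1 ∧ b = 0) ∨ (a = 0 ∧ b = 1) ∨ (a = 0 ∧ b = -1) := by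
  have ha : a^2 ≤ 1 := by nlinarith [sq_nonneg b]
  have hb : b^2 ≤ 1 := by nlinarith [sq_nonneg a]
  have ha1 : -1 ≤ a ∧ a ≤ 1 := by constructor <;> nlinarith
  have hb1 : -1 ≤ b ∧ b ≤ 1 := by constructor <;> nlinarith
  obtain ⟨h1, h2⟩ := ha1; obtain ⟨h3, h4⟩ := hb1
  interval_cases a <;> interval_cases b <;> omega

lemma adj_iff {u v : ℤ × ℤ} : adj u v ↔
    u = (v.1 + 1, v.2) ∨ u = (v.1 - 1, v.2) ∨ u = (v.1, v.2 + 1) ∨ u = (v.1, v.2 - 1) := by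
  constructor
  · intro h
    rcases sq_add_sq_eq_one h with ⟨h1,h2⟩|⟨h1,h2⟩|⟨h1,h2⟩|⟨h1,h2⟩
    · left; apply Prod.ext <;> simp <;> omega
    · right; left; apply Prod.ext <;> simp <;> omega
    · right; right; left; apply Prod.ext <;> simp <;> omega
    · right; right; right; apply Prod.ext <;> simp <;> omega
  · rintro (rfl|rfl|rfl|rfl) <;> simp [adj]

lemma adj_comm {u v : ℤ × ℤ} : adj u v ↔ adj v u := by unfold adj; constructor <;> intro h <;> nlinarith

def nbrFinset (v : ℤ × ℤ) : Finset (ℤ × ℤ) :=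
  {(v.1 + 1, v.2), (v.1 - 1, v.2), (v.1, v.2 + 1), (v.1, v.2 - 1)}

lemma mem_nbrFinset {u v : ℤ × ℤ} : u ∈ nbrFinset v ↔ adj u v := by
  simp [nbrFinset, adj_iff]

lemma card_nbrFinset (v : ℤ × ℤ) : (nbrFinset v).card = 4 := by
  simp only [nbrFinset]
  rw [Finset.card_insert_of_notMem, Finset.card_insert_of_notMem,
    Finset.card_insert_of_notMem, Finset.card_singleton] <;>
    simp [Prod.ext_iff] <;> omega

lemma lapAt_coe (A : Finset (ℤ × ℤ)) (f : ℤ × ℤ → ℤ) (v : ℤ × ℤ) :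
    lapAt ↑A f v = (∑ u ∈ A.filter (fun u => adj u v), f u) - 4 * f v := by
  unfold lapAt
  congr 1
  rw [show {w : ℤ × ℤ | w ∈ (↑A : Set (ℤ × ℤ)) ∧ adj w v}
      = ↑(A.filter (fun u => adj u v)) by ext u; simp]
  exact finsum_mem_coe_finset _ _

lemma lapAt_full {S : Set (ℤ × ℤ)} {v : ℤ × ℤ} (h : ∀ w, adj w v → w ∈ S) (f : ℤ × ℤ → ℤ) :
    lapAt S f v = (∑ u ∈ nbrFinset v, f u) - 4 * f v := by
  unfold lapAt
  congr 1
  rw [show {w : ℤ × ℤ | w ∈ S ∧ adj w v} = ↑(nbrFinset v) by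
    ext u; simp [mem_nbrFinset]; intro hu; exact h u hu]
  exact finsum_mem_coe_finset _ _

lemma harmOn_mono {D S : Set (ℤ × ℤ)} (hDS : D ⊆ S) {f : ℤ × ℤ → ℤ}
    (hf : HarmOn S f) : HarmOn D f := by
  intro v hv hint
  have hintS : ∀ w, adj w v → w ∈ S := fun w hw => hDS (hint w hw)
  rw [lapAt_full hint, ← lapAt_full hintS]
  exact hf v (hDS hv) hintS

def e (p : ℤ × ℤ) : ℝ × ℝ := ((p.1 : ℝ), (p.2 : ℝ))

lemma e_inj : Function.Injective e := by
  intro p q h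
  simp only [e, Prod.ext_iff] at h ⊢
  exact_mod_cast h

/-- lattice convexity of a finite set -/
def LC (A : Finset (ℤ × ℤ)) : Prop :=
  ∀ z : ℤ × ℤ, e z ∈ convexHull ℝ (e '' ↑A) → z ∈ A

lemma mid_mem {A : Finset (ℤ × ℤ)} (hA : LC A) {x y z : ℤ × ℤ}
    (hx : x ∈ A) (hy : y ∈ A) (h1 : 2 * z.1 = x.1 + y.1) (h2 : 2 * z.2 = x.2 + y.2) :
    z ∈ A := by
  apply hA
  have hseg : e z ∈ segment ℝ (e x) (e y) := by
    refine ⟨1/2, 1/2, by norm_num, by norm_num, by norm_num, ?_⟩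
    simp only [e, Prod.ext_iff, Prod.smul_mk, Prod.mk_add_mk, smul_eq_mul]
    constructor
    · have hc : ((x.1 : ℝ) + y.1) = 2 * z.1 := by exact_mod_cast h1.symm
      field_simp; linarith
    · have hc : ((x.2 : ℝ) + y.2) = 2 * z.2 := by exact_mod_cast h2.symm
      field_simp; linarith
  exact segment_subset_convexHull (Set.mem_image_of_mem _ hx) (Set.mem_image_of_mem _ hy) hseg

/-- `w` forces the value at `v`: `w ∈ A`, adjacent to `v`, and all other
neighbors of `w` are in `A`. -/
def Forces (A : Finset (ℤ × ℤ)) (v w : ℤ × ℤ) : Prop :=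
  w ∈ A ∧ adj v w ∧ ∀ u : ℤ × ℤ, adj u w → u ≠ v → u ∈ A

lemma not_all_nbrs_mem {A : Finset (ℤ × ℤ)} (hA : LC A) {v : ℤ × ℤ} (hv : v ∉ A)
    (h : ∀ u, adj u v → u ∈ A) : False := by
  have h1 : (v.1 + 1, v.2) ∈ A := h _ (adj_iff.2 (Or.inl rfl))
  have h2 : (v.1 - 1, v.2) ∈ A := h _ (adj_iff.2 (Or.inr (Or.inl rfl)))
  exact hv (mid_mem hA h1 h2 (by simp; ring) (by simp; ring))

lemma forces_unique {A : Finset (ℤ × ℤ)} (hA : LC A) {v w₁ w₂ : ℤ × ℤ} (hv : v ∉ A)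
    (h1 : Forces A v w₁) (h2 : Forces A v w₂) : w₁ = w₂ := by
  by_contra hne
  obtain ⟨hw1A, hadj1, hall1⟩ := h1
  obtain ⟨hw2A, hadj2, hall2⟩ := h2
  -- each wᵢ = v + eᵢ with eᵢ a unit direction
  have c1 := adj_iff.1 (adj_comm.1 hadj1)
  have c2 := adj_iff.1 (adj_comm.1 hadj2)
  apply hv
  -- helper: get membership of w + f for f ≠ direction towards v
  rcases c1 with rfl|rfl|rfl|rfl <;> rcases c2 with h|h|h|h <;>
    (try exact absurd h.symm hne) <;> subst h
  -- w₁ = (v.1+1, v.2) cases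
  · -- w₂ = (v.1-1,v.2): opposite
    have a1 : (v.1 + 1, v.2 + 1) ∈ A := hall1 _ (by rw [adj_iff]; simp) (by simp [Prod.ext_iff] <;> omega)
    have a2 : (v.1 - 1, v.2 + 1) ∈ A := hall2 _ (by rw [adj_iff]; simp) (by simp [Prod.ext_iff] <;> omega)
    have a3 : (v.1 + 1, v.2 - 1) ∈ A := hall1 _ (by rw [adj_iff]; simp) (by simp [Prod.ext_iff] <;> omega)
    have a4 : (v.1 - 1, v.2 - 1) ∈ A := hall2 _ (by rw [adj_iff]; simp) (by simp [Prod.ext_iff] <;> omega)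
    have m1 : (v.1, v.2 + 1) ∈ A := mid_mem hA a1 a2 (by simp; ring) (by simp; ring)
    have m2 : (v.1, v.2 - 1) ∈ A := mid_mem hA a3 a4 (by simp; ring) (by simp; ring)
    exact mid_mem hA m1 m2 (by simp; ring) (by simp; ring)
  · -- w₂ = (v.1, v.2+1): perp
    have a1 : (v.1 + 1, v.2 - 1) ∈ A := hall1 _ (by rw [adj_iff]; simp) (by simp [Prod.ext_iff] <;> omega)
    have a2 : (v.1 - 1, v.2 + 1) ∈ A := hall2 _ (by rw [adj_iff]; simp) (by simp [Prod.ext_iff] <;> omega)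
    exact mid_mem hA a1 a2 (by simp; ring) (by simp; ring)
  · -- w₂ = (v.1, v.2-1): perp
    have a1 : (v.1 + 1, v.2 + 1) ∈ A := hall1 _ (by rw [adj_iff]; simp) (by simp [Prod.ext_iff] <;> omega)
    have a2 : (v.1 - 1, v.2 - 1) ∈ A := hall2 _ (by rw [adj_iff]; simp) (by simp [Prod.ext_iff] <;> omega)
    exact mid_mem hA a1 a2 (by simp; ring) (by simp; ring)
  · -- w₁ = (v.1-1,v.2), w₂ = (v.1+1,v.2)
    have a1 : (v.1 + 1, v.2 + 1) ∈ A := hall2 _ (by rw [adj_iff]; simp) (by simp [Prod.ext_iff] <;> omega)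
    have a2 : (v.1 - 1, v.2 + 1) ∈ A := hall1 _ (by rw [adj_iff]; simp) (by simp [Prod.ext_iff] <;> omega)
    have a3 : (v.1 + 1, v.2 - 1) ∈ A := hall2 _ (by rw [adj_iff]; simp) (by simp [Prod.ext_iff] <;> omega)
    have a4 : (v.1 - 1, v.2 - 1) ∈ A := hall1 _ (by rw [adj_iff]; simp) (by simp [Prod.ext_iff] <;> omega)
    have m1 : (v.1, v.2 + 1) ∈ A := mid_mem hA a1 a2 (by simp; ring) (by simp; ring)
    have m2 : (v.1, v.2 - 1) ∈ A := mid_mem hA a3 a4 (by simp; ring) (by simp; ring)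
    exact mid_mem hA m1 m2 (by simp; ring) (by simp; ring)
  · have a1 : (v.1 - 1, v.2 - 1) ∈ A := hall1 _ (by rw [adj_iff]; simp) (by simp [Prod.ext_iff] <;> omega)
    have a2 : (v.1 + 1, v.2 + 1) ∈ A := hall2 _ (by rw [adj_iff]; simp) (by simp [Prod.ext_iff] <;> omega)
    exact mid_mem hA a1 a2 (by simp; ring) (by simp; ring)
  · have a1 : (v.1 - 1, v.2 + 1) ∈ A := hall1 _ (by rw [adj_iff]; simp) (by simp [Prod.ext_iff] <;> omega)
    have a2 : (v.1 + 1, v.2 - 1) ∈ A := hall2 _ (by rw [adj_iff]; simp) (by simp [Prod.ext_iff] <;> omega)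
    exact mid_mem hA a1 a2 (by simp; ring) (by simp; ring)
  · -- w₁ = (v.1,v.2+1), w₂ = (v.1+1,v.2)
    have a1 : (v.1 - 1, v.2 + 1) ∈ A := hall1 _ (by rw [adj_iff]; simp) (by simp [Prod.ext_iff] <;> omega)
    have a2 : (v.1 + 1, v.2 - 1) ∈ A := hall2 _ (by rw [adj_iff]; simp) (by simp [Prod.ext_iff] <;> omega)
    exact mid_mem hA a1 a2 (by simp; ring) (by simp; ring)
  · have a1 : (v.1 + 1, v.2 + 1) ∈ A := hall1 _ (by rw [adj_iff]; simp) (by simp [Prod.ext_iff] <;> omega)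
    have a2 : (v.1 - 1, v.2 - 1) ∈ A := hall2 _ (by rw [adj_iff]; simp) (by simp [Prod.ext_iff] <;> omega)
    exact mid_mem hA a1 a2 (by simp; ring) (by simp; ring)
  · -- w₁ = (v.1,v.2+1), w₂ = (v.1,v.2-1): opposite vertical
    have a1 : (v.1 + 1, v.2 + 1) ∈ A := hall1 _ (by rw [adj_iff]; simp) (by simp [Prod.ext_iff] <;> omega)
    have a2 : (v.1 + 1, v.2 - 1) ∈ A := hall2 _ (by rw [adj_iff]; simp) (by simp [Prod.ext_iff] <;> omega)
    have a3 : (v.1 - 1, v.2 + 1) ∈ A := hall1 _ (by rw [adj_iff]; simp) (by simp [Prod.ext_iff] <;> omega)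
    have a4 : (v.1 - 1, v.2 - 1) ∈ A := hall2 _ (by rw [adj_iff]; simp) (by simp [Prod.ext_iff] <;> omega)
    have m1 : (v.1 + 1, v.2) ∈ A := mid_mem hA a1 a2 (by simp; ring) (by simp; ring)
    have m2 : (v.1 - 1, v.2) ∈ A := mid_mem hA a3 a4 (by simp; ring) (by simp; ring)
    exact mid_mem hA m1 m2 (by simp; ring) (by simp; ring)
  · -- w₁ = (v.1,v.2-1), w₂ = (v.1+1,v.2)
    have a1 : (v.1 - 1, v.2 - 1) ∈ A := hall1 _ (by rw [adj_iff]; simp) (by simp [Prod.ext_iff] <;> omega)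
    have a2 : (v.1 + 1, v.2 + 1) ∈ A := hall2 _ (by rw [adj_iff]; simp) (by simp [Prod.ext_iff] <;> omega)
    exact mid_mem hA a1 a2 (by simp; ring) (by simp; ring)
  · have a1 : (v.1 + 1, v.2 - 1) ∈ A := hall1 _ (by rw [adj_iff]; simp) (by simp [Prod.ext_iff] <;> omega)
    have a2 : (v.1 - 1, v.2 + 1) ∈ A := hall2 _ (by rw [adj_iff]; simp) (by simp [Prod.ext_iff] <;> omega)
    exact mid_mem hA a1 a2 (by simp; ring) (by simp; ring)
  · -- w₁ = (v.1,v.2-1), w₂ = (v.1,v.2+1)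
    have a1 : (v.1 + 1, v.2 - 1) ∈ A := hall1 _ (by rw [adj_iff]; simp) (by simp [Prod.ext_iff] <;> omega)
    have a2 : (v.1 + 1, v.2 + 1) ∈ A := hall2 _ (by rw [adj_iff]; simp) (by simp [Prod.ext_iff] <;> omega)
    have a3 : (v.1 - 1, v.2 - 1) ∈ A := hall1 _ (by rw [adj_iff]; simp) (by simp [Prod.ext_iff] <;> omega)
    have a4 : (v.1 - 1, v.2 + 1) ∈ A := hall2 _ (by rw [adj_iff]; simp) (by simp [Prod.ext_iff] <;> omega)
    have m1 : (v.1 + 1, v.2) ∈ A := mid_mem hA a1 a2 (by simp; ring) (by simp; ring)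
    have m2 : (v.1 - 1, v.2) ∈ A := mid_mem hA a3 a4 (by simp; ring) (by simp; ring)
    exact mid_mem hA m1 m2 (by simp; ring) (by simp; ring)

lemma step_lemma (A : Finset (ℤ × ℤ)) (hA : LC A) (v : ℤ × ℤ) (hv : v ∉ A)
    (f : ℤ × ℤ → ℤ) (hf : HarmOn ↑A f) :
    ∃ g : ℤ × ℤ → ℤ, HarmOn ↑(insert v A) g ∧ ∀ u ∈ A, g u = f u := by
  by_cases hex : ∃ w, Forces A v w
  · obtain ⟨w, hw⟩ := hex
    refine ⟨Function.update f v (4 * f w - ∑ u ∈ A.filter (fun u => adj u w), f u),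
      ?_, fun u hu => Function.update_of_ne (ne_of_mem_of_not_mem hu hv) _ _⟩
    set g := Function.update f v (4 * f w - ∑ u ∈ A.filter (fun u => adj u w), f u) with hg
    intro z hz hint
    simp only [Finset.coe_insert, Set.mem_insert_iff, Finset.mem_coe] at hz hint
    rcases hz with rfl | hzA
    · exact absurd (fun u hu => (hint u hu).resolve_left
        (fun h => by exact absurd (h ▸ hu) (by simp [adj])))
        (fun h => not_all_nbrs_mem hA hv h)
    · rw [lapAt_coe]
      by_cases hvz : adj v z
      · -- z forces v, so z = w
        have hforce : Forces A v z := ⟨hzA, hvz, fun u hu hne =>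
          ((hint u hu).resolve_left hne)⟩
        have hzw : z = w := forces_unique hA hv hforce hw
        subst hzw
        rw [Finset.filter_insert, if_pos hvz,
          Finset.sum_insert (by simp [hv])]
        have hgz : g z = f z := Function.update_of_ne (ne_of_mem_of_not_mem hzA hv) _ _
        have hgv : g v = 4 * f z - ∑ u ∈ A.filter (fun u => adj u z), f u := by
          simp [hg, Function.update_self]
        have hsum : ∑ u ∈ A.filter (fun u => adj u z), g u
            = ∑ u ∈ A.filter (fun u => adj u z), f u := by
          apply Finset.sum_congr rfl
          intro u hu
          exact Function.update_of_ne (ne_of_mem_of_not_mem (Finset.mem_filter.1 hu).1 hv) _ _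
        rw [hsum, hgv, hgz]; ring
      · -- v is not a neighbor of z, so everything happens inside A
        have hAint : ∀ u, adj u z → u ∈ A := fun u hu =>
          (hint u hu).resolve_left (fun h => hvz (h ▸ hu))
        have hfilter : (insert v A).filter (fun u => adj u z)
            = A.filter (fun u => adj u z) := by
          rw [Finset.filter_insert, if_neg hvz]
        rw [hfilter]
        have hgz : g z = f z := Function.update_of_ne (ne_of_mem_of_not_mem hzA hv) _ _
        have hsum : ∑ u ∈ A.filter (fun u => adj u z), g u
            = ∑ u ∈ A.filter (fun u => adj u z), f u := by
          apply Finset.sum_congr rfl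
          intro u hu
          exact Function.update_of_ne (ne_of_mem_of_not_mem (Finset.mem_filter.1 hu).1 hv) _ _
        rw [hsum, hgz, ← lapAt_coe]
        exact hf z hzA hAint
  · -- no forcing vertex: f itself works
    refine ⟨f, ?_, fun u _ => rfl⟩
    intro z hz hint
    simp only [Finset.coe_insert, Set.mem_insert_iff, Finset.mem_coe] at hz hint
    rcases hz with rfl | hzA
    · exact absurd (fun u hu => (hint u hu).resolve_left
        (fun h => by exact absurd (h ▸ hu) (by simp [adj])))
        (fun h => not_all_nbrs_mem hA hv h)
    · by_cases hvz : adj v z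
      · exact absurd ⟨hzA, hvz, fun u hu hne => ((hint u hu).resolve_left hne)⟩
          (fun h => hex ⟨z, h⟩)
      · have hAint : ∀ u, adj u z → u ∈ A := fun u hu =>
          (hint u hu).resolve_left (fun h => hvz (h ▸ hu))
        rw [lapAt_coe, Finset.filter_insert, if_neg hvz, ← lapAt_coe]
        exact hf z hzA hAint

lemma exists_next (B A : Finset (ℤ × ℤ)) (hAB : A ⊆ B) (hA : LC A) (hB : LC B)
    (hAne : A.Nonempty) (hne : (B \ A).Nonempty) :
    ∃ v ∈ B \ A, LC (insert v A) := by
  classical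
  set K : Set (ℝ × ℝ) := convexHull ℝ (e '' ↑A) with hK
  have hKne : K.Nonempty := by
    obtain ⟨a, ha⟩ := hAne
    exact ⟨e a, subset_convexHull ℝ _ (Set.mem_image_of_mem _ ha)⟩
  have hKcpt : IsCompact K := (((Set.toFinite _).image e).isCompact_convexHull ℝ)
  have hKcl : IsClosed K := hKcpt.isClosed
  obtain ⟨v, hvmem, hvmin⟩ := Finset.exists_min_image (B \ A)
    (fun u => Metric.infDist (e u) K) hne
  refine ⟨v, hvmem, ?_⟩
  obtain ⟨hvB, hvA⟩ := Finset.mem_sdiff.1 hvmem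
  intro z hz
  by_contra hzmem
  simp only [Finset.mem_insert, not_or] at hzmem
  obtain ⟨hzv, hzA⟩ := hzmem
  -- z lies on a segment from e v to a point of K
  have hAne' : (e '' ↑A).Nonempty := (hAne.to_set).image e
  rw [Finset.coe_insert, Set.image_insert_eq, convexHull_insert hAne'] at hz
  rw [mem_convexJoin] at hz
  obtain ⟨x, hx, q, hq, hseg⟩ := hz
  rw [Set.mem_singleton_iff] at hx
  subst hx
  -- hseg : e z ∈ segment ℝ (e v) q, hq : q ∈ K
  obtain ⟨a, b, ha, hb, hab, heq⟩ := hseg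
  -- z is in B
  have hsub : (e '' ↑A : Set (ℝ × ℝ)) ⊆ e '' ↑B :=
    Set.image_mono (by exact_mod_cast hAB)
  have hzB : z ∈ B := by
    apply hB
    rw [← heq]
    exact (convex_convexHull ℝ (e '' ↑B))
      (subset_convexHull ℝ _ (Set.mem_image_of_mem _ (by exact_mod_cast hvB)))
      (convexHull_mono hsub hq) ha hb hab
  have hevK : e v ∉ K := fun h => hvA (hA v h)
  have hdpos : 0 < Metric.infDist (e v) K :=
    (hKcl.notMem_iff_infDist_pos hKne).1 hevK
  -- a cannot be 1 (else z = v), nor 0 (else z ∈ A)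
  have ha1 : a ≠ 1 := by
    intro h
    subst h
    have hb0 : b = 0 := by linarith
    subst hb0
    apply hzv
    apply e_inj
    rw [← heq]; simp
  have ha0 : a ≠ 0 := by
    intro h
    subst h
    have hb1 : b = 1 := by linarith
    subst hb1
    apply hzA
    apply hA
    rw [← heq]; simpa using hq
  have halt : a < 1 := lt_of_le_of_ne (by linarith) ha1
  have hagt : 0 < a := lt_of_le_of_ne ha (Ne.symm ha0)
  -- pick closest point p of K to e v
  obtain ⟨p, hpK, hpd⟩ := hKcpt.exists_infDist_eq_dist hKne (e v)
  have hcomb : a • p + b • q ∈ K := (convex_convexHull ℝ _) hpK hq ha hb hab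
  have hdist : dist (e z) (a • p + b • q) = a * dist (e v) p := by
    rw [dist_eq_norm, dist_eq_norm, ← heq]
    have : a • e v + b • q - (a • p + b • q) = a • (e v - p) := by
      rw [smul_sub]; abel
    rw [this, norm_smul, Real.norm_eq_abs, abs_of_pos hagt]
  have hlt : Metric.infDist (e z) K < Metric.infDist (e v) K := by
    calc Metric.infDist (e z) K ≤ dist (e z) (a • p + b • q) :=
          Metric.infDist_le_dist_of_mem hcomb
      _ = a * Metric.infDist (e v) K := by rw [hdist, hpd]
      _ < Metric.infDist (e v) K := by nlinarith
  exact absurd (hvmin z (Finset.mem_sdiff.2 ⟨hzB, hzA⟩)) (not_le.2 hlt)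

lemma extend_all : ∀ (n : ℕ) (A B : Finset (ℤ × ℤ)), LC A → LC B → A.Nonempty → A ⊆ B →
    (B \ A).card = n → ∀ f : ℤ × ℤ → ℤ, HarmOn ↑A f →
    ∃ g : ℤ × ℤ → ℤ, HarmOn ↑B g ∧ ∀ u ∈ A, g u = f u := by
  intro n
  induction n with
  | zero =>
    intro A B hA hB hAne hAB hcard f hf
    have hBA : B = A := Finset.Subset.antisymm
      (fun x hx => by
        by_contra hxA
        have : x ∈ B \ A := Finset.mem_sdiff.2 ⟨hx, hxA⟩
        rw [Finset.card_eq_zero] at hcard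
        simp [hcard] at this) hAB
    exact ⟨f, hBA ▸ hf, fun u _ => rfl⟩
  | succ n ih =>
    intro A B hA hB hAne hAB hcard f hf
    have hne : (B \ A).Nonempty := Finset.card_pos.1 (by omega)
    obtain ⟨v, hvmem, hLC⟩ := exists_next B A hAB hA hB hAne hne
    obtain ⟨hvB, hvA⟩ := Finset.mem_sdiff.1 hvmem
    obtain ⟨f₁, hf₁, hf₁eq⟩ := step_lemma A hA v hvA f hf
    have hsub : insert v A ⊆ B := Finset.insert_subset hvB hAB
    have hcard' : (B \ insert v A).card = n := by
      have : B \ insert v A = (B \ A).erase v := by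
        ext x; simp [Finset.mem_sdiff, Finset.mem_erase]; tauto
      rw [this, Finset.card_erase_of_mem hvmem, hcard]; omega
    obtain ⟨g, hg, hgeq⟩ := ih (insert v A) B hLC hB
      (hAne.mono (Finset.subset_insert _ _)) hsub hcard' f₁ hf₁
    exact ⟨g, hg, fun u hu => by
      rw [hgeq u (Finset.mem_insert_of_mem hu), hf₁eq u hu]⟩

lemma all_nbrs_of_ncard {S : Set (ℤ × ℤ)} {v w : ℤ × ℤ} (hvS : v ∉ S)
    (hadj : adj v w) (hcount : {u : ℤ × ℤ | u ∈ S ∧ adj u w}.ncard = 3) :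
    ∀ u : ℤ × ℤ, adj u w → u ≠ v → u ∈ S := by
  have hvmem : v ∈ nbrFinset w := mem_nbrFinset.2 hadj
  have hsub : {u : ℤ × ℤ | u ∈ S ∧ adj u w} ⊆ ↑((nbrFinset w).erase v) := by
    intro u hu
    simp only [Finset.coe_erase, Set.mem_diff, Finset.mem_coe, Set.mem_singleton_iff]
    exact ⟨mem_nbrFinset.2 hu.2, fun h => hvS (h ▸ hu.1)⟩
  have hcard : (↑((nbrFinset w).erase v) : Set (ℤ × ℤ)).ncard = 3 := by
    rw [Set.ncard_coe_finset, Finset.card_erase_of_mem hvmem, card_nbrFinset]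
  have heq := Set.eq_of_subset_of_ncard_le hsub (le_of_eq (hcard.trans hcount.symm))
    (Set.toFinite _)
  intro u hu hne
  have : u ∈ (↑((nbrFinset w).erase v) : Set (ℤ × ℤ)) := by
    simp only [Finset.coe_erase, Set.mem_diff, Finset.mem_coe, Set.mem_singleton_iff]
    exact ⟨mem_nbrFinset.2 hu, hne⟩
  rw [← heq] at this
  exact this.1

def Qpred (a b c d : ℤ) (v : ℤ × ℤ) : Prop :=
  a ≤ v.1 + v.2 ∧ v.1 + v.2 ≤ b ∧ c ≤ v.1 - v.2 ∧ v.1 - v.2 ≤ d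

instance (a b c d : ℤ) : DecidablePred (Qpred a b c d) := fun v => by
  unfold Qpred; infer_instance

noncomputable def QF (a b c d : ℤ) : Finset (ℤ × ℤ) :=
  (Finset.Icc (-(|a| + |b| + |c| + |d|), -(|a| + |b| + |c| + |d|))
    ((|a| + |b| + |c| + |d|), (|a| + |b| + |c| + |d|))).filter (Qpred a b c d)

lemma mem_QF {a b c d : ℤ} {v : ℤ × ℤ} : v ∈ QF a b c d ↔ Qpred a b c d v := by
  constructor
  · exact fun h => (Finset.mem_filter.1 h).2
  · intro h
    refine Finset.mem_filter.2 ⟨?_, h⟩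
    rw [Finset.mem_Icc, Prod.le_def, Prod.le_def]
    obtain ⟨h1, h2, h3, h4⟩ := h
    have := abs_nonneg a; have := abs_nonneg b; have := abs_nonneg c; have := abs_nonneg d
    have := le_abs_self a; have := le_abs_self b; have := le_abs_self c; have := le_abs_self d
    have := neg_abs_le a; have := neg_abs_le b; have := neg_abs_le c; have := neg_abs_le d
    constructor <;> constructor <;> simp only [] <;> linarith

lemma LC_QF (a b c d : ℤ) : LC (QF a b c d) := by
  intro z hz
  set C : Set (ℝ × ℝ) := {p : ℝ × ℝ | (a : ℝ) ≤ p.1 + p.2 ∧ p.1 + p.2 ≤ (b : ℝ) ∧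
    (c : ℝ) ≤ p.1 - p.2 ∧ p.1 - p.2 ≤ (d : ℝ)} with hC
  have hconv : Convex ℝ C := by
    intro x hx y hy s t hs ht hst
    simp only [hC, Set.mem_setOf_eq] at hx hy ⊢
    simp only [Prod.fst_add, Prod.snd_add, Prod.smul_fst, Prod.smul_snd, smul_eq_mul]
    obtain ⟨hx1, hx2, hx3, hx4⟩ := hx
    obtain ⟨hy1, hy2, hy3, hy4⟩ := hy
    have e1 := mul_le_mul_of_nonneg_left hx1 hs
    have e2 := mul_le_mul_of_nonneg_left hy1 ht
    have e3 := mul_le_mul_of_nonneg_left hx2 hs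
    have e4 := mul_le_mul_of_nonneg_left hy2 ht
    have e5 := mul_le_mul_of_nonneg_left hx3 hs
    have e6 := mul_le_mul_of_nonneg_left hy3 ht
    have e7 := mul_le_mul_of_nonneg_left hx4 hs
    have e8 := mul_le_mul_of_nonneg_left hy4 ht
    have ca : s * (a : ℝ) + t * a = a := by rw [← add_mul, hst, one_mul]
    have cb : s * (b : ℝ) + t * b = b := by rw [← add_mul, hst, one_mul]
    have cc : s * (c : ℝ) + t * c = c := by rw [← add_mul, hst, one_mul]
    have cd : s * (d : ℝ) + t * d = d := by rw [← add_mul, hst, one_mul]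
    refine ⟨by nlinarith, by nlinarith, by nlinarith, by nlinarith⟩
  have hsub : (e '' ↑(QF a b c d) : Set (ℝ × ℝ)) ⊆ C := by
    rintro _ ⟨u, hu, rfl⟩
    obtain ⟨h1, h2, h3, h4⟩ := mem_QF.1 (by exact_mod_cast hu)
    simp only [hC, Set.mem_setOf_eq, e]
    refine ⟨?_, ?_, ?_, ?_⟩ <;> push_cast <;>
      [exact_mod_cast h1; exact_mod_cast h2; exact_mod_cast h3; exact_mod_cast h4]
  have := convexHull_min hsub hconv hz
  simp only [hC, Set.mem_setOf_eq, e] at this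
  obtain ⟨t1, t2, t3, t4⟩ := this
  exact mem_QF.2 ⟨by exact_mod_cast t1, by exact_mod_cast t2,
    by exact_mod_cast t3, by exact_mod_cast t4⟩

lemma LC_of_isConvexDomain {Γ : Finset (ℤ × ℤ)} (h : IsConvexDomain Γ) : LC Γ := by
  obtain ⟨P, hP, -, hmem⟩ := h
  intro z hz
  have hsub : (e '' ↑Γ : Set (ℝ × ℝ)) ⊆ P := by
    rintro _ ⟨u, hu, rfl⟩
    exact (hmem u).1 (by exact_mod_cast hu)
  exact (hmem z).2 (convexHull_min hsub hP hz)

/-- `extStep` preserves containment in the diamond `QF a b c d`. -/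
lemma extStep_subset_QF {a b c d : ℤ} {S : Set (ℤ × ℤ)}
    (hS : S ⊆ ↑(QF a b c d)) : extStep S ⊆ ↑(QF a b c d) := by
  rintro v (hv | ⟨hvS, w, hwS, hadj, hcount⟩)
  · exact hS hv
  · have hall := all_nbrs_of_ncard hvS hadj hcount
    have hwQ : Qpred a b c d w := mem_QF.1 (by exact_mod_cast hS hwS)
    obtain ⟨q1, q2, q3, q4⟩ := hwQ
    have key : ∀ u : ℤ × ℤ, adj u w → u ≠ v → Qpred a b c d u := fun u h1 h2 =>
      mem_QF.1 (by exact_mod_cast hS (hall u h1 h2))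
    apply Finset.mem_coe.2
    apply mem_QF.2
    rcases adj_iff.1 hadj with rfl | rfl | rfl | rfl
    · -- v = (w.1+1, w.2): s = s+1, t = t+1
      by_cases hb : w.1 + 1 + w.2 ≤ b
      · by_cases hd : w.1 + 1 - w.2 ≤ d
        · exact ⟨by simp; omega, by simp; omega, by simp; omega, by simp; omega⟩
        · -- use u = (w.1, w.2 - 1), which has t = t_w + 1
          have := key (w.1, w.2 - 1) (adj_iff.2 (by simp)) (by simp [Prod.ext_iff] <;> omega)
          obtain ⟨u1, u2, u3, u4⟩ := this
          simp at u1 u2 u3 u4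
          exact absurd hd (by simp at hd ⊢; omega)
      · -- use u = (w.1, w.2 + 1), which has s = s_w + 1
        have := key (w.1, w.2 + 1) (adj_iff.2 (by simp)) (by simp [Prod.ext_iff] <;> omega)
        obtain ⟨u1, u2, u3, u4⟩ := this
        simp at u1 u2 u3 u4
        exact absurd hb (by simp at hb ⊢; omega)
    · -- v = (w.1-1, w.2): s = s-1, t = t-1
      by_cases ha' : a ≤ w.1 - 1 + w.2
      · by_cases hc' : c ≤ w.1 - 1 - w.2
        · exact ⟨by simp; omega, by simp; omega, by simp; omega, by simp; omega⟩
        · have := key (w.1, w.2 + 1) (adj_iff.2 (by simp)) (by simp [Prod.ext_iff] <;> omega)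
          obtain ⟨u1, u2, u3, u4⟩ := this
          simp at u1 u2 u3 u4
          exact absurd hc' (by simp at hc' ⊢; omega)
      · have := key (w.1, w.2 - 1) (adj_iff.2 (by simp)) (by simp [Prod.ext_iff] <;> omega)
        obtain ⟨u1, u2, u3, u4⟩ := this
        simp at u1 u2 u3 u4
        exact absurd ha' (by simp at ha' ⊢; omega)
    · -- v = (w.1, w.2+1): s = s+1, t = t-1
      by_cases hb : w.1 + (w.2 + 1) ≤ b
      · by_cases hc' : c ≤ w.1 - (w.2 + 1)
        · exact ⟨by simp; omega, by simp; omega, by simp; omega, by simp; omega⟩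
        · have := key (w.1 - 1, w.2) (adj_iff.2 (by simp)) (by simp [Prod.ext_iff] <;> omega)
          obtain ⟨u1, u2, u3, u4⟩ := this
          simp at u1 u2 u3 u4
          exact absurd hc' (by simp at hc' ⊢; omega)
      · have := key (w.1 + 1, w.2) (adj_iff.2 (by simp)) (by simp [Prod.ext_iff] <;> omega)
        obtain ⟨u1, u2, u3, u4⟩ := this
        simp at u1 u2 u3 u4
        exact absurd hb (by simp at hb ⊢; omega)
    · -- v = (w.1, w.2-1): s = s-1, t = t+1
      by_cases ha' : a ≤ w.1 + (w.2 - 1)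
      · by_cases hd : w.1 - (w.2 - 1) ≤ d
        · exact ⟨by simp; omega, by simp; omega, by simp; omega, by simp; omega⟩
        · have := key (w.1 + 1, w.2) (adj_iff.2 (by simp)) (by simp [Prod.ext_iff] <;> omega)
          obtain ⟨u1, u2, u3, u4⟩ := this
          simp at u1 u2 u3 u4
          exact absurd hd (by simp at hd ⊢; omega)
      · have := key (w.1 - 1, w.2) (adj_iff.2 (by simp)) (by simp [Prod.ext_iff] <;> omega)
        obtain ⟨u1, u2, u3, u4⟩ := this
        simp at u1 u2 u3 u4
        exact absurd ha' (by simp at ha' ⊢; omega)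

lemma diamondHull_subset_QF {a b c d : ℤ} {S : Set (ℤ × ℤ)}
    (hS : S ⊆ ↑(QF a b c d)) : diamondHull S ⊆ ↑(QF a b c d) := by
  apply Set.iUnion_subset
  intro k
  induction k with
  | zero => simpa using hS
  | succ k ih =>
    rw [Function.iterate_succ_apply']
    exact extStep_subset_QF ih

lemma uniqueness_on_hull {S : Set (ℤ × ℤ)} {φ ψ : ℤ × ℤ → ℤ}
    (hφ : HarmOn (diamondHull S) φ) (hψ : HarmOn (diamondHull S) ψ)
    (hagree : ∀ v ∈ S, ψ v = φ v) :
    ∀ v ∈ diamondHull S, ψ v = φ v := by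
  have hsub : ∀ k, extStep^[k] S ⊆ diamondHull S := fun k => Set.subset_iUnion (fun k => extStep^[k] S) k
  have main : ∀ k, ∀ v ∈ extStep^[k] S, ψ v = φ v := by
    intro k
    induction k with
    | zero => simpa using hagree
    | succ k ih =>
      rw [Function.iterate_succ_apply']
      rintro v (hv | ⟨hvS, w, hwS, hadj, hcount⟩)
      · exact ih v hv
      · have hall := all_nbrs_of_ncard hvS hadj hcount
        have hvD : v ∈ diamondHull S := by
          apply hsub (k + 1)
          rw [Function.iterate_succ_apply']
          exact Or.inr ⟨hvS, w, hwS, hadj, hcount⟩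
        have hint : ∀ u, adj u w → u ∈ diamondHull S := by
          intro u hu
          by_cases huv : u = v
          · subst huv; exact hvD
          · exact hsub k (hall u hu huv)
        have h1 := hφ w (hsub k hwS) hint
        have h2 := hψ w (hsub k hwS) hint
        rw [lapAt_full hint] at h1 h2
        have hvmem : v ∈ nbrFinset w := mem_nbrFinset.2 hadj
        rw [← Finset.add_sum_erase _ _ hvmem] at h1 h2
        have hsum : ∑ u ∈ (nbrFinset w).erase v, ψ u
            = ∑ u ∈ (nbrFinset w).erase v, φ u := by
          apply Finset.sum_congr rfl
          intro u hu
          obtain ⟨hune, humem⟩ := Finset.mem_erase.1 hu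
          exact ih u (hall u (mem_nbrFinset.1 humem) hune)
        have hw : ψ w = φ w := ih w hwS
        rw [hsum, hw] at h2
        omega
  intro v hv
  rw [diamondHull, Set.mem_iUnion] at hv
  obtain ⟨k, hk⟩ := hv
  exact main k v hk

/-- Every integer-valued harmonic function on a finite nonempty
convex domain `Γ ⊂ ℤ²` extends uniquely to an integer-valued harmonic function on
the diamond hull of `Γ` (uniqueness meaning: any two harmonic extensions agree on
the diamond hull). -/
theorem harmonic_extends_to_diamondHull (Γ : Finset (ℤ × ℤ)) (hne : Γ.Nonempty)
    (hconv : IsConvexDomain Γ) (H : ℤ × ℤ → ℤ) (hH : HarmOn (↑Γ : Set (ℤ × ℤ)) H) :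
    ∃ φ : ℤ × ℤ → ℤ,
      (HarmOn (diamondHull (↑Γ : Set (ℤ × ℤ))) φ ∧ ∀ v ∈ Γ, φ v = H v) ∧
      ∀ ψ : ℤ × ℤ → ℤ, HarmOn (diamondHull (↑Γ : Set (ℤ × ℤ))) ψ →
        (∀ v ∈ Γ, ψ v = H v) →
        ∀ v ∈ diamondHull (↑Γ : Set (ℤ × ℤ)), ψ v = φ v := by
  set a := Γ.inf' hne (fun p => p.1 + p.2) with ha
  set b := Γ.sup' hne (fun p => p.1 + p.2) with hb
  set c := Γ.inf' hne (fun p => p.1 - p.2) with hc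
  set d := Γ.sup' hne (fun p => p.1 - p.2) with hd
  have hΓQ : Γ ⊆ QF a b c d := fun v hv => mem_QF.2
    ⟨Finset.inf'_le (fun p : ℤ × ℤ => p.1 + p.2) hv,
     Finset.le_sup' (fun p : ℤ × ℤ => p.1 + p.2) hv,
     Finset.inf'_le (fun p : ℤ × ℤ => p.1 - p.2) hv,
     Finset.le_sup' (fun p : ℤ × ℤ => p.1 - p.2) hv⟩
  have hLCΓ := LC_of_isConvexDomain hconv
  have hLCQ := LC_QF a b c d
  obtain ⟨φ, hφQ, hφeq⟩ := extend_all ((QF a b c d) \ Γ).card Γ (QF a b c d)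
    hLCΓ hLCQ hne hΓQ rfl H hH
  have hDQ : diamondHull (↑Γ : Set (ℤ × ℤ)) ⊆ ↑(QF a b c d) :=
    diamondHull_subset_QF (by exact_mod_cast hΓQ)
  have hφD : HarmOn (diamondHull (↑Γ : Set (ℤ × ℤ))) φ := harmOn_mono hDQ hφQ
  refine ⟨φ, ⟨hφD, hφeq⟩, ?_⟩
  intro ψ hψ hψeq v hv
  exact uniqueness_on_hull hφD hψ
    (fun u hu => by rw [hψeq u hu, hφeq u hu]) v hv
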